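/- Let R be a commutative ring of prime characteristic p, let 𝔞 be an ideal of R generated by two elements, let q be a power of p, and let k be an integer with 0 < k < p. Then 𝔞^[kq−1] = 𝔞^{kq−1}, i.e., the generalized Frobenius power with exponent kq−1 coincides with the ordinary power. -/

import Mathlib

open scoped BigOperators

/-- The `q`-th bracket power of an ideal: the ideal generated by `q`-th powers
of elements of `a`. -/
def bracketPow {R : Type*} [CommRing R] (a : Ideal R) (q : ℕ) : Ideal R :=
  Ideal.span ((fun x => x ^ q) '' (a : Set R))

/-- The generalized `k`-th Frobenius power of an ideal, defined via the base-`p`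
digits of `k`:  `𝔞^[k] = ∏ᵢ (𝔞^[pⁱ])^(kᵢ)` where `kᵢ = k / pⁱ % p` is the `i`-th
base-`p` digit of `k` (digits with index `> k` vanish, so the product below suffices). -/
def frobPow {R : Type*} [CommRing R] (p : ℕ) (a : Ideal R) (k : ℕ) : Ideal R :=
  ∏ i ∈ Finset.range (k + 1), bracketPow a (p ^ i) ^ (k / p ^ i % p)

section aux

variable {R : Type*} [CommRing R]

lemma bracketPow_one (a : Ideal R) : bracketPow a 1 = a := by
  simp [bracketPow, Ideal.span_eq]

lemma bracketPow_eq_map (p : ℕ) [ExpChar R p] (a : Ideal R) (n : ℕ) :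
    bracketPow a (p ^ n) = a.map (iterateFrobenius R p n) := by
  unfold bracketPow
  rw [Ideal.map, Ideal.span]
  rfl

lemma bracketPow_bracketPow (p : ℕ) [ExpChar R p] (a : Ideal R) (n : ℕ) :
    bracketPow (bracketPow a p) (p ^ n) = bracketPow a (p ^ (n + 1)) := by
  have h1 : bracketPow a p = bracketPow a (p ^ 1) := by rw [pow_one]
  rw [h1, bracketPow_eq_map, bracketPow_eq_map, bracketPow_eq_map, Ideal.map_map,
    ← iterateFrobenius_add]

lemma bracketPow_span_pair (p : ℕ) [ExpChar R p] (f g : R) (n : ℕ) :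
    bracketPow (Ideal.span {f, g}) (p ^ n) = Ideal.span {f ^ p ^ n, g ^ p ^ n} := by
  rw [bracketPow_eq_map, Ideal.map_span, Set.image_pair]
  simp [iterateFrobenius_def]

lemma span_pair_pow_le (f g : R) (n : ℕ) (I : Ideal R)
    (h : ∀ i j, i + j = n → f ^ i * g ^ j ∈ I) : Ideal.span {f, g} ^ n ≤ I := by
  induction n generalizing I with
  | zero =>
    have := h 0 0 rfl
    rw [pow_zero, Ideal.one_eq_top, top_le_iff, Ideal.eq_top_iff_one]
    simpa using this
  | succ n ih =>
    rw [pow_succ']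
    refine Ideal.mul_le.2 fun r hr s hs => ?_
    obtain ⟨c, d, rfl⟩ := Ideal.mem_span_pair.1 hr
    have hf : f * s ∈ I := by
      have : s ∈ Submodule.colon I (Ideal.span {f}) := by
        refine ih _ (fun i j hij => ?_) hs
        rw [Ideal.mem_colon_span_singleton]
        have := h (i + 1) j (by omega)
        rw [pow_succ] at this
        convert this using 1; ring
      rw [Ideal.mem_colon_span_singleton] at this
      rwa [mul_comm]
    have hg : g * s ∈ I := by
      have : s ∈ Submodule.colon I (Ideal.span {g}) := by
        refine ih _ (fun i j hij => ?_) hs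
        rw [Ideal.mem_colon_span_singleton]
        have := h i (j + 1) (by omega)
        rw [pow_succ] at this
        convert this using 1; ring
      rw [Ideal.mem_colon_span_singleton] at this
      rwa [mul_comm]
    have : (c * f + d * g) * s = c * (f * s) + d * (g * s) := by ring
    rw [this]
    exact I.add_mem (I.mul_mem_left c hf) (I.mul_mem_left d hg)

/-- The key "no-carry" lemma for two-generated ideals. -/
lemma key (p : ℕ) (hp : 2 ≤ p) (f g : R) (m : ℕ) :
    Ideal.span {f, g} ^ (p * m + (p - 1)) =
      Ideal.span {f, g} ^ (p - 1) * Ideal.span {f ^ p, g ^ p} ^ m := by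
  apply le_antisymm
  · refine span_pair_pow_le f g _ _ (fun i j hij => ?_)
    set r := i % p with hr
    set s := j % p with hs
    set i' := i / p with hi'
    set j' := j / p with hj'
    have hif : i = p * i' + r := (Nat.div_add_mod i p).symm
    have hjf : j = p * j' + s := (Nat.div_add_mod j p).symm
    have hrlt : r < p := Nat.mod_lt _ (by omega)
    have hslt : s < p := Nat.mod_lt _ (by omega)
    have hsum : p * (i' + j') + (r + s) = p * m + (p - 1) := by
      rw [Nat.mul_add]; omega
    have h1 : i' + j' < m + 1 := by
      have : p * (i' + j') < p * (m + 1) := by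
        have e1 : p * (m + 1) = p * m + p := by ring
        rw [e1]; omega
      exact Nat.lt_of_mul_lt_mul_left this
    have h2 : m < i' + j' + 1 := by
      have : p * m < p * (i' + j' + 1) := by
        have e2 : p * (i' + j' + 1) = p * (i' + j') + p := by ring
        rw [e2]; omega
      exact Nat.lt_of_mul_lt_mul_left this
    have hrs2 : i' + j' = m := by omega
    have hrs1 : r + s = p - 1 := by
      rw [hrs2] at hsum; omega
    have heq : f ^ i * g ^ j = (f ^ r * g ^ s) * ((f ^ p) ^ i' * (g ^ p) ^ j') := by
      rw [hif, hjf]; ring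
    rw [heq]
    refine Ideal.mul_mem_mul ?_ ?_
    · have hfm : f ∈ Ideal.span ({f, g} : Set R) := Ideal.subset_span (by simp)
      have hgm : g ∈ Ideal.span ({f, g} : Set R) := Ideal.subset_span (by simp)
      have := Ideal.mul_mem_mul (Ideal.pow_mem_pow hfm r) (Ideal.pow_mem_pow hgm s)
      rwa [← pow_add, hrs1] at this
    · have hfm : f ^ p ∈ Ideal.span ({f ^ p, g ^ p} : Set R) := Ideal.subset_span (by simp)
      have hgm : g ^ p ∈ Ideal.span ({f ^ p, g ^ p} : Set R) := Ideal.subset_span (by simp)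
      have := Ideal.mul_mem_mul (Ideal.pow_mem_pow hfm i') (Ideal.pow_mem_pow hgm j')
      rwa [← pow_add, hrs2] at this
  · have hb : Ideal.span ({f ^ p, g ^ p} : Set R) ≤ Ideal.span ({f, g} : Set R) ^ p := by
      rw [Ideal.span_le]
      rintro x (rfl | rfl)
      · exact Ideal.pow_mem_pow (Ideal.subset_span (by simp)) p
      · exact Ideal.pow_mem_pow (Ideal.subset_span (by simp)) p
    calc Ideal.span ({f, g} : Set R) ^ (p - 1) * Ideal.span ({f ^ p, g ^ p} : Set R) ^ m
        ≤ Ideal.span ({f, g} : Set R) ^ (p - 1) * (Ideal.span ({f, g} : Set R) ^ p) ^ m :=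
          Ideal.mul_mono le_rfl (Ideal.pow_right_mono hb m)
      _ = Ideal.span ({f, g} : Set R) ^ (p * m + (p - 1)) := by
          rw [← pow_mul, ← pow_add]
          congr 1
          omega

lemma frobPow_of_lt (p : ℕ) (hp : 2 ≤ p) (a : Ideal R) (n : ℕ) (hn : n < p) :
    frobPow p a n = a ^ n := by
  unfold frobPow
  rw [Finset.prod_eq_single 0]
  · simp [bracketPow_one, Nat.mod_eq_of_lt hn]
  · intro i _ hi
    have hpi : n < p ^ i := lt_of_lt_of_le hn (by
      calc p = p ^ 1 := (pow_one p).symm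
        _ ≤ p ^ i := Nat.pow_le_pow_right (by omega) (by omega))
    rw [Nat.div_eq_of_lt hpi]
    simp
  · intro h
    simp at h

end aux

theorem stmt_8 {R : Type*} [CommRing R] (p : ℕ) (hp : p.Prime) [CharP R p]
    (a : Ideal R) (hgen : ∃ f g : R, a = Ideal.span {f, g})
    (e k : ℕ) (hk0 : 0 < k) (hkp : k < p) :
    frobPow p a (k * p ^ e - 1) = a ^ (k * p ^ e - 1) := by
  haveI : Fact p.Prime := ⟨hp⟩
  haveI : ExpChar R p := inferInstance
  have hp2 : 2 ≤ p := hp.two_le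
  obtain ⟨f, g, rfl⟩ := hgen
  induction e generalizing f g with
  | zero =>
    simp only [pow_zero, mul_one]
    exact frobPow_of_lt p hp2 _ (k - 1) (by omega)
  | succ e ih =>
    have hm1 : k * p ^ e = (k * p ^ e - 1) + 1 := by
      have : 1 ≤ k * p ^ e := Nat.one_le_iff_ne_zero.2 (by positivity)
      omega
    set m := k * p ^ e - 1 with hm
    have hnm : k * p ^ (e + 1) = p * m + p := by
      calc k * p ^ (e + 1) = (k * p ^ e) * p := by ring
        _ = (m + 1) * p := by rw [hm1]
        _ = p * m + p := by ring
    have hn : k * p ^ (e + 1) - 1 = p * m + (p - 1) := by omega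
    set n := k * p ^ (e + 1) - 1 with hndef
    set b := bracketPow (Ideal.span {f, g} : Ideal R) p with hb
    have hbspan : b = Ideal.span {f ^ p, g ^ p} := by
      have := bracketPow_span_pair p f g 1
      rw [pow_one] at this
      rw [hb, this]
    have hd0 : n % p = p - 1 := by
      rw [hn, Nat.mul_add_mod, Nat.mod_eq_of_lt (by omega)]
    have hnp : n / p = m := by
      rw [hn, Nat.mul_add_div (by omega), Nat.div_eq_of_lt (by omega), Nat.add_zero]
    have hdsucc : ∀ i, n / p ^ (i + 1) = m / p ^ i := fun i => by
      rw [pow_succ', ← Nat.div_div_eq_div_mul, hnp]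
    have hstepA : frobPow p (Ideal.span {f, g}) n =
        (Ideal.span {f, g} : Ideal R) ^ (p - 1) * frobPow p b m := by
      unfold frobPow
      rw [Finset.prod_range_succ']
      rw [mul_comm]
      congr 1
      · rw [pow_zero, bracketPow_one, Nat.div_one, hd0]
      · have hterm : ∀ i, bracketPow (Ideal.span {f, g} : Ideal R) (p ^ (i + 1)) ^
            (n / p ^ (i + 1) % p) = bracketPow b (p ^ i) ^ (m / p ^ i % p) := by
          intro i
          rw [bracketPow_bracketPow, hdsucc]
        rw [Finset.prod_congr rfl (fun i _ => hterm i)]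
        have hmn : m + 1 ≤ n := by
          have : m ≤ p * m := Nat.le_mul_of_pos_left m (by omega)
          omega
        symm
        apply Finset.prod_subset (Finset.range_subset_range.2 hmn)
        intro i _ hi
        rw [Finset.mem_range, not_lt] at hi
        have hpi : m < p ^ i := by
          calc m < i := by omega
            _ < 2 ^ i := Nat.lt_two_pow_self
            _ ≤ p ^ i := Nat.pow_le_pow_left hp2 i
        rw [Nat.div_eq_of_lt hpi]
        simp
    have ihb := ih (f ^ p) (g ^ p)
    rw [hstepA, hbspan, ihb, hn]
    exact (key p hp2 f g m).symm
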